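/- Let γ₁ = ε₁ − ε₂, γ₂ = K⁻ − δ + ε₂, γ₃ = δ − ε₃ − K⁻, γ₄ = ε₃ − ε₄, γ₅ = ε₃ + ε₄, γ₆ = K⁺ − ε₁ − ε₂. Then B(γ₃,γ₃) = 0, and the generalized Weyl reflection w_{γ₃} maps this simple root system onto the system (ε₁ − ε₂, ε₂ − ε₃, K⁻ − δ + ε₃, δ − ε₄ − K⁻, δ + ε₄ − K⁻, K⁺ − K⁻ + δ − ε₁ − ε₂ − ε₃); explicitly, w_{γ₃} fixes γ₁, maps γ₂ to ε₂ − ε₃, γ₃ to K⁻ − δ + ε₃, γ₄ to δ − ε₄ − K⁻, γ₅ to δ + ε₄ − K⁻, and γ₆ to K⁺ − K⁻ + δ − ε₁ − ε₂ − ε₃. -/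

import Mathlib

open scoped Classical

namespace HKMRank6

/-- Basis order: `(K⁺, K⁻, ε₁, ε₂, ε₃, ε₄, δ)`. The symmetric bilinear form with
`B(K⁺,K⁻) = B(K⁻,K⁺) = 1`, `B(εᵢ,εᵢ) = 1`, `B(δ,δ) = -1`, all other pairs zero. -/
def B (x y : Fin 7 → ℝ) : ℝ :=
  x 0 * y 1 + x 1 * y 0 + x 2 * y 2 + x 3 * y 3 + x 4 * y 4 + x 5 * y 5 - x 6 * y 6

def Kp : Fin 7 → ℝ := ![1, 0, 0, 0, 0, 0, 0]
def Km : Fin 7 → ℝ := ![0, 1, 0, 0, 0, 0, 0]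
def e1 : Fin 7 → ℝ := ![0, 0, 1, 0, 0, 0, 0]
def e2 : Fin 7 → ℝ := ![0, 0, 0, 1, 0, 0, 0]
def e3 : Fin 7 → ℝ := ![0, 0, 0, 0, 1, 0, 0]
def e4 : Fin 7 → ℝ := ![0, 0, 0, 0, 0, 1, 0]
def d  : Fin 7 → ℝ := ![0, 0, 0, 0, 0, 0, 1]

/-- The generalized Weyl (odd) reflection associated with an isotropic vector `α`:
`w_α(α) = -α`; for `β ≠ α`, `w_α(β) = β + α` if `B α β ≠ 0` and `w_α(β) = β` otherwise. -/
noncomputable def w (α β : Fin 7 → ℝ) : Fin 7 → ℝ :=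
  if β = α then -α else if B α β ≠ 0 then β + α else β

lemma val0 (a b c e f g h : ℝ) : ![a,b,c,e,f,g,h] 0 = a := rfl
lemma val1 (a b c e f g h : ℝ) : ![a,b,c,e,f,g,h] 1 = b := rfl
lemma val2 (a b c e f g h : ℝ) : ![a,b,c,e,f,g,h] 2 = c := rfl
lemma val3 (a b c e f g h : ℝ) : ![a,b,c,e,f,g,h] 3 = e := rfl
lemma val4 (a b c e f g h : ℝ) : ![a,b,c,e,f,g,h] 4 = f := rfl
lemma val5 (a b c e f g h : ℝ) : ![a,b,c,e,f,g,h] 5 = g := rfl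
lemma val6 (a b c e f g h : ℝ) : ![a,b,c,e,f,g,h] 6 = h := rfl

theorem odd_reflection_third_system :
    B (d - e3 - Km) (d - e3 - Km) = 0 ∧
    w (d - e3 - Km) (e1 - e2) = e1 - e2 ∧
    w (d - e3 - Km) (Km - d + e2) = e2 - e3 ∧
    w (d - e3 - Km) (d - e3 - Km) = Km - d + e3 ∧
    w (d - e3 - Km) (e3 - e4) = d - e4 - Km ∧
    w (d - e3 - Km) (e3 + e4) = d + e4 - Km ∧
    w (d - e3 - Km) (Kp - e1 - e2) = Kp - Km + d - e1 - e2 - e3 := by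
  refine ⟨?_, ?_, ?_, ?_, ?_, ?_, ?_⟩
  · simp only [B, Pi.sub_apply, Pi.add_apply, d, e3, Km, val0, val1, val2, val3, val4, val5, val6]; norm_num
  · rw [w, if_neg, if_neg]
    · simp only [B, Pi.sub_apply, Pi.add_apply, d, e3, Km, e1, e2, val0, val1, val2, val3, val4, val5, val6]; norm_num
    · intro h
      have := congrFun h 2
      simp only [Pi.sub_apply, d, e3, Km, e1, e2, val2] at this; norm_num at this
  · rw [w, if_neg, if_pos]
    · funext i; fin_cases i <;> norm_num [val5, val6, d, e3, Km, e1, e2] <;> ring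
    · simp only [B, Pi.sub_apply, Pi.add_apply, d, e3, Km, e2, val0, val1, val2, val3, val4, val5, val6]; norm_num
    · intro h
      have := congrFun h 1
      norm_num [val5, val6, d, e3, Km, e2] at this
  · rw [w, if_pos rfl]
    funext i; fin_cases i <;> norm_num [val5, val6, d, e3, Km] <;> ring
  · rw [w, if_neg, if_pos]
    · funext i; fin_cases i <;> norm_num [val5, val6, d, e3, e4, Km] <;> ring
    · simp only [B, Pi.sub_apply, Pi.add_apply, d, e3, e4, Km, val0, val1, val2, val3, val4, val5, val6]; norm_num
    · intro h
      have := congrFun h 6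
      simp only [Pi.sub_apply, Pi.add_apply, d, e3, e4, Km, val6] at this; norm_num at this
  · rw [w, if_neg, if_pos]
    · funext i; fin_cases i <;> norm_num [val5, val6, d, e3, e4, Km] <;> ring
    · simp only [B, Pi.sub_apply, Pi.add_apply, d, e3, e4, Km, val0, val1, val2, val3, val4, val5, val6]; norm_num
    · intro h
      have := congrFun h 6
      simp only [Pi.sub_apply, Pi.add_apply, d, e3, e4, Km, val6] at this; norm_num at this
  · rw [w, if_neg, if_pos]
    · funext i; fin_cases i <;> norm_num [val5, val6, d, e3, Km, Kp, e1, e2] <;> ring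
    · simp only [B, Pi.sub_apply, Pi.add_apply, d, e3, Km, Kp, e1, e2, val0, val1, val2, val3, val4, val5, val6]; norm_num
    · intro h
      have := congrFun h 0
      norm_num [val5, val6, d, e3, Km, Kp, e1, e2] at this


end HKMRank6
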